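/- Let p be a prime, let n, k be natural numbers with k ≤ n, and let M be a subspace of (ℤ/p)ⁿ of dimension at least k. Then there exists a vector v ∈ M that has at least k coordinates equal to 1. -/

import Mathlib

set_option maxHeartbeats 1000000

theorem stmt5 (p : ℕ) [Fact p.Prime] (n k : ℕ) (hk : k ≤ n)
    (M : Submodule (ZMod p) (Fin n → ZMod p))
    (hM : k ≤ Module.finrank (ZMod p) M) :
    ∃ v ∈ M, k ≤ (Finset.univ.filter fun i : Fin n => v i = 1).card := by
  classical
  rcases Nat.eq_zero_or_pos k with rfl | hk0
  · exact ⟨0, M.zero_mem, Nat.zero_le _⟩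
  have hn : 0 < n := lt_of_lt_of_le hk0 hk
  -- coordinate functionals on M
  set e : Fin n → Module.Dual (ZMod p) M := fun i => (LinearMap.proj i).comp M.subtype with he
  have heval : ∀ (i : Fin n) (v : M), e i v = (v : Fin n → ZMod p) i := fun _ _ => rfl
  -- the span of the coordinate functionals has full rank
  have hcoann : (Submodule.span (ZMod p) (Set.range e)).dualCoannihilator = ⊥ := by
    rw [eq_bot_iff]
    intro v hv
    have hv' := (Submodule.mem_dualCoannihilator v).mp hv
    have : ∀ i : Fin n, (v : Fin n → ZMod p) i = 0 := fun i =>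
      hv' (e i) (Submodule.subset_span ⟨i, rfl⟩)
    have : v = 0 := Subtype.ext (funext this)
    simp [this]
  have hWrank : Module.finrank (ZMod p) (Submodule.span (ZMod p) (Set.range e)) =
      Module.finrank (ZMod p) M := by
    have := Subspace.finrank_add_finrank_dualCoannihilator_eq
      (Submodule.span (ZMod p) (Set.range e))
    rw [hcoann] at this
    simpa using this
  -- extract k linearly independent coordinate functionals
  obtain ⟨t, hts, hspan, hti⟩ := exists_linearIndependent (ZMod p) (Set.range e)
  have htfin : t.Finite := hti.setFinite
  letI := htfin.fintype
  have htcard : k ≤ htfin.toFinset.card := by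
    have h1 : Module.finrank (ZMod p) (Submodule.span (ZMod p) t) = t.toFinset.card :=
      finrank_span_set_eq_card hti
    have h2 : t.toFinset = htfin.toFinset := by simp
    rw [← h2, ← h1, hspan, hWrank]
    exact hM
  obtain ⟨t', ht't, ht'card⟩ := Finset.exists_subset_card_eq htcard
  have ht'sub : (t' : Set (Module.Dual (ZMod p) M)) ⊆ t := by
    intro x hx
    have := ht't hx
    simpa using this
  have ht'ind : LinearIndependent (ZMod p)
      (fun x : (t' : Set (Module.Dual (ZMod p) M)) => (x : Module.Dual (ZMod p) M)) :=
    LinearIndepOn.mono (s := t) (v := id) hti ht'sub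
  -- choose indices for the functionals in t'
  have hex : ∀ φ ∈ t', ∃ i : Fin n, e i = φ := fun φ hφ => hts (ht'sub hφ)
  set f : Module.Dual (ZMod p) M → Fin n := fun φ =>
    if h : ∃ i : Fin n, e i = φ then h.choose else ⟨0, hn⟩ with hf
  have hef : ∀ φ ∈ t', e (f φ) = φ := by
    intro φ hφ
    have h := hex φ hφ
    simp only [hf, dif_pos h]
    exact h.choose_spec
  set S : Finset (Fin n) := t'.image f with hS
  have hScard : S.card = k := by
    rw [hS, Finset.card_image_of_injOn, ht'card]
    intro φ hφ ψ hψ hfp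
    rw [← hef φ hφ, ← hef ψ hψ, hfp]
  have hSmem : ∀ j ∈ S, e j ∈ t' ∧ f (e j) = j := by
    intro j hj
    obtain ⟨φ, hφ, rfl⟩ := Finset.mem_image.mp hj
    rw [hef φ hφ]
    exact ⟨hφ, rfl⟩
  -- the family of functionals indexed by S is linearly independent
  have hSind : LinearIndependent (ZMod p) (fun j : S => e (j : Fin n)) := by
    have hg : Function.Injective (fun j : S => (⟨e (j : Fin n), (hSmem j j.2).1⟩ :
        (t' : Set (Module.Dual (ZMod p) M)))) := by
      intro j j' h
      have h' : e (j : Fin n) = e (j' : Fin n) := congrArg Subtype.val h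
      have h1 := (hSmem j j.2).2
      have h2 := (hSmem j' j'.2).2
      apply Subtype.ext
      rw [← h1, ← h2, h']
    have hcomp := ht'ind.comp (fun j : S => (⟨e (j : Fin n), (hSmem j j.2).1⟩ :
        (t' : Set (Module.Dual (ZMod p) M)))) hg
    exact hcomp
  -- the joint evaluation map is surjective
  set Φ : M →ₗ[ZMod p] (S → ZMod p) := LinearMap.pi (fun j : S => e (j : Fin n)) with hΦ
  have hdual : ∀ j : S, Φ.dualMap (LinearMap.proj j) = e (j : Fin n) :=
    fun j => LinearMap.ext fun v => rfl
  have hrange_ge : k ≤ Module.finrank (ZMod p) (LinearMap.range Φ) := by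
    rw [← LinearMap.finrank_range_dualMap_eq_finrank_range]
    have hsp : Submodule.span (ZMod p) (Set.range fun j : S => e (j : Fin n)) ≤
        LinearMap.range Φ.dualMap := by
      rw [Submodule.span_le]
      rintro _ ⟨j, rfl⟩
      exact ⟨LinearMap.proj j, hdual j⟩
    have h1 : Module.finrank (ZMod p)
        (Submodule.span (ZMod p) (Set.range fun j : S => e (j : Fin n))) = k := by
      rw [finrank_span_eq_card hSind]
      simp [hScard]
    calc k = _ := h1.symm
      _ ≤ _ := Submodule.finrank_mono hsp
  have hfun : Module.finrank (ZMod p) (S → ZMod p) = k := by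
    rw [Module.finrank_fintype_fun_eq_card]
    simp [hScard]
  have hsurj : Function.Surjective Φ := by
    rw [← LinearMap.range_eq_top]
    apply Submodule.eq_top_of_finrank_eq
    have h2 := Submodule.finrank_le (LinearMap.range Φ)
    omega
  obtain ⟨v, hv⟩ := hsurj (fun _ => 1)
  refine ⟨(v : Fin n → ZMod p), v.2, ?_⟩
  rw [← hScard]
  apply Finset.card_le_card
  intro j hj
  simp only [Finset.mem_filter, Finset.mem_univ, true_and]
  have : Φ v ⟨j, hj⟩ = 1 := congrFun hv ⟨j, hj⟩
  simpa [hΦ, heval] using this
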